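/- In the 5-dimensional Lie group example, F(x,y,z) = η(y)F(x,z,ξ) + η(z)F(x,y,ξ) holds for all x, y, z in 𝔤, where F(x,y,z) = g((∇ₓφ)y, z) and η is the dual of ξ, and furthermore θ(z) := Σᵢ εᵢ F(eᵢ, eᵢ, z) = 0 and θ*(z) := Σᵢ εᵢ F(eᵢ, φeᵢ, z) = 0 for all z (where εᵢ = g(eᵢ,eᵢ)). Hence the manifold belongs to class F₆. -/
import Mathlib


open Finset

noncomputable section

/-- The standard basis of ℝ⁵; `e 4` plays the role of ξ. -/
def e (i : Fin 5) : Fin 5 → ℝ := Pi.single i 1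

/-- The Reeb vector ξ = e₅. -/
def xi : Fin 5 → ℝ := e 4

/-- The contact form η, dual to ξ. -/
def eta (x : Fin 5 → ℝ) : ℝ := x 4

/-- The structure endomorphism: φe₁ = e₃, φe₂ = e₄, φe₃ = -e₁, φe₄ = -e₂, φξ = 0. -/
def phi (x : Fin 5 → ℝ) : Fin 5 → ℝ := ![-(x 2), -(x 3), x 0, x 1, 0]

/-- The B-metric g = diag(1,1,-1,-1,1). -/
def gf (x y : Fin 5 → ℝ) : ℝ := x 0 * y 0 + x 1 * y 1 - x 2 * y 2 - x 3 * y 3 + x 4 * y 4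

/-- The signs εᵢ = g(eᵢ,eᵢ). -/
def eps : Fin 5 → ℝ := ![1, 1, -1, -1, 1]

/-- The operator x ↦ [x, ξ] on span(e₁,…,e₄), determined by the paper's commutators. -/
def D (l1 l2 l3 l4 m1 m3 : ℝ) (x : Fin 5 → ℝ) : Fin 5 → ℝ :=
  ![l1 * x 0 + m1 * x 1 - l3 * x 2 - m3 * x 3,
    l2 * x 0 - l1 * x 1 - l4 * x 2 + l3 * x 3,
    l3 * x 0 + m3 * x 1 + l1 * x 2 + m1 * x 3,
    l4 * x 0 - l3 * x 1 + l2 * x 2 - l1 * x 3,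
    0]

/-- The Lie bracket: span(e₁,…,e₄) is abelian, [x,ξ] = D x, extended bilinearly and
antisymmetrically. -/
def br (l1 l2 l3 l4 m1 m3 : ℝ) (x y : Fin 5 → ℝ) : Fin 5 → ℝ :=
  y 4 • D l1 l2 l3 l4 m1 m3 x - x 4 • D l1 l2 l3 l4 m1 m3 y

/-- The Levi-Civita connection via the Koszul formula
2g(∇ₓy, z) = g([x,y],z) + g([z,x],y) + g([z,y],x), recovered componentwise in the
orthogonal basis. -/
def nabla (l1 l2 l3 l4 m1 m3 : ℝ) (x y : Fin 5 → ℝ) : Fin 5 → ℝ :=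
  fun i => eps i * ((gf (br l1 l2 l3 l4 m1 m3 x y) (e i)
    + gf (br l1 l2 l3 l4 m1 m3 (e i) x) y
    + gf (br l1 l2 l3 l4 m1 m3 (e i) y) x) / 2)

/-- The curvature tensor R(x,y)z = ∇ₓ∇_y z - ∇_y∇ₓ z - ∇_{[x,y]} z. -/
def Rc (l1 l2 l3 l4 m1 m3 : ℝ) (x y z : Fin 5 → ℝ) : Fin 5 → ℝ :=
  nabla l1 l2 l3 l4 m1 m3 x (nabla l1 l2 l3 l4 m1 m3 y z)
    - nabla l1 l2 l3 l4 m1 m3 y (nabla l1 l2 l3 l4 m1 m3 x z)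
    - nabla l1 l2 l3 l4 m1 m3 (br l1 l2 l3 l4 m1 m3 x y) z

/-- The Ricci tensor ρ(y,z) = Σᵢ εᵢ g(R(eᵢ,y)z, eᵢ). -/
def rho (l1 l2 l3 l4 m1 m3 : ℝ) (y z : Fin 5 → ℝ) : ℝ :=
  ∑ i : Fin 5, eps i * gf (Rc l1 l2 l3 l4 m1 m3 (e i) y z) (e i)

/-- The scalar curvature τ = Σⱼ εⱼ ρ(eⱼ,eⱼ). -/
def tau (l1 l2 l3 l4 m1 m3 : ℝ) : ℝ :=
  ∑ j : Fin 5, eps j * rho l1 l2 l3 l4 m1 m3 (e j) (e j)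

/-- The associated Ricci tensor ρ*(y,z) = Σᵢ εᵢ g(R(eᵢ,y)z, φeᵢ). -/
def rhoStar (l1 l2 l3 l4 m1 m3 : ℝ) (y z : Fin 5 → ℝ) : ℝ :=
  ∑ i : Fin 5, eps i * gf (Rc l1 l2 l3 l4 m1 m3 (e i) y z) (phi (e i))

/-- The associated scalar curvature τ* = Σⱼ εⱼ ρ*(eⱼ,eⱼ). -/
def tauStar (l1 l2 l3 l4 m1 m3 : ℝ) : ℝ :=
  ∑ j : Fin 5, eps j * rhoStar l1 l2 l3 l4 m1 m3 (e j) (e j)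

/-- The fundamental tensor F(x,y,z) = g((∇ₓφ)y, z) = g(∇ₓ(φy) - φ(∇ₓy), z). -/
def Ften (l1 l2 l3 l4 m1 m3 : ℝ) (x y z : Fin 5 → ℝ) : ℝ :=
  gf (nabla l1 l2 l3 l4 m1 m3 x (phi y) - phi (nabla l1 l2 l3 l4 m1 m3 x y)) z

/-- The square norm ‖∇φ‖² = Σᵢₖ εᵢ εₖ g((∇_{eᵢ}φ)eₖ, (∇_{eᵢ}φ)eₖ). -/
def snPhi (l1 l2 l3 l4 m1 m3 : ℝ) : ℝ :=
  ∑ i : Fin 5, ∑ k : Fin 5, eps i * eps k *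
    gf (nabla l1 l2 l3 l4 m1 m3 (e i) (phi (e k)) - phi (nabla l1 l2 l3 l4 m1 m3 (e i) (e k)))
       (nabla l1 l2 l3 l4 m1 m3 (e i) (phi (e k)) - phi (nabla l1 l2 l3 l4 m1 m3 (e i) (e k)))

set_option maxHeartbeats 1000000 in
lemma nabla_eq (l1 l2 l3 l4 m1 m3 : ℝ) (x y : Fin 5 → ℝ) :
    nabla l1 l2 l3 l4 m1 m3 x y =
      ![l1 * x 0 * y 4 + (1/2) * l2 * x 1 * y 4 + (1/2) * l2 * x 4 * y 1 - l3 * x 2 * y 4 - (1/2) * l4 * x 3 * y 4 - (1/2) * l4 * x 4 * y 3 + (1/2) * m1 * x 1 * y 4 - (1/2) * m1 * x 4 * y 1 - (1/2) * m3 * x 3 * y 4 + (1/2) * m3 * x 4 * y 3,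
        -l1 * x 1 * y 4 + (1/2) * l2 * x 0 * y 4 - (1/2) * l2 * x 4 * y 0 + l3 * x 3 * y 4 - (1/2) * l4 * x 2 * y 4 + (1/2) * l4 * x 4 * y 2 + (1/2) * m1 * x 0 * y 4 + (1/2) * m1 * x 4 * y 0 - (1/2) * m3 * x 2 * y 4 - (1/2) * m3 * x 4 * y 2,
        l1 * x 2 * y 4 + (1/2) * l2 * x 3 * y 4 + (1/2) * l2 * x 4 * y 3 + l3 * x 0 * y 4 + (1/2) * l4 * x 1 * y 4 + (1/2) * l4 * x 4 * y 1 + (1/2) * m1 * x 3 * y 4 - (1/2) * m1 * x 4 * y 3 + (1/2) * m3 * x 1 * y 4 - (1/2) * m3 * x 4 * y 1,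
        -l1 * x 3 * y 4 + (1/2) * l2 * x 2 * y 4 - (1/2) * l2 * x 4 * y 2 - l3 * x 1 * y 4 + (1/2) * l4 * x 0 * y 4 - (1/2) * l4 * x 4 * y 0 + (1/2) * m1 * x 2 * y 4 + (1/2) * m1 * x 4 * y 2 + (1/2) * m3 * x 0 * y 4 + (1/2) * m3 * x 4 * y 0,
        -l1 * x 0 * y 0 + l1 * x 1 * y 1 + l1 * x 2 * y 2 - l1 * x 3 * y 3 - (1/2) * l2 * x 0 * y 1 - (1/2) * l2 * x 1 * y 0 + (1/2) * l2 * x 2 * y 3 + (1/2) * l2 * x 3 * y 2 + l3 * x 0 * y 2 - l3 * x 1 * y 3 + l3 * x 2 * y 0 - l3 * x 3 * y 1 + (1/2) * l4 * x 0 * y 3 + (1/2) * l4 * x 1 * y 2 + (1/2) * l4 * x 2 * y 1 + (1/2) * l4 * x 3 * y 0 - (1/2) * m1 * x 0 * y 1 - (1/2) * m1 * x 1 * y 0 + (1/2) * m1 * x 2 * y 3 + (1/2) * m1 * x 3 * y 2 + (1/2) * m3 * x 0 * y 3 + (1/2) * m3 * x 1 * y 2 + (1/2) * m3 * x 2 *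 y 1 + (1/2) * m3 * x 3 * y 0] := by
  funext i
  fin_cases i <;>
  · simp only [nabla, gf, br, D, e, eps, Pi.single, Function.update, Pi.sub_apply,
      Pi.smul_apply, smul_eq_mul, Matrix.cons_val_zero, Matrix.cons_val_one, Matrix.head_cons,
      Matrix.cons_val_two, Matrix.tail_cons, Matrix.cons_val_three, Matrix.cons_val_four,
      Matrix.cons_val_fin_one, Fin.isValue]
    simp (config := { decide := true }) only [Matrix.cons_val', Matrix.cons_val_zero,
      Matrix.cons_val_one, Matrix.head_cons, ite_true, ite_false, if_true, if_false]
    norm_num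
    ring

set_option maxHeartbeats 1000000 in
lemma Ften_eq (l1 l2 l3 l4 m1 m3 : ℝ) (x y z : Fin 5 → ℝ) :
    Ften l1 l2 l3 l4 m1 m3 x y z =
      l1 * x 0 * y 2 * z 4 + l1 * x 0 * y 4 * z 2 - l1 * x 1 * y 3 * z 4 - l1 * x 1 * y 4 * z 3 + l1 * x 2 * y 0 * z 4 + l1 * x 2 * y 4 * z 0 - l1 * x 3 * y 1 * z 4 - l1 * x 3 * y 4 * z 1 + (1/2) * l2 * x 0 * y 3 * z 4 + (1/2) * l2 * x 0 * y 4 * z 3 + (1/2) * l2 * x 1 * y 2 * z 4 + (1/2) * l2 * x 1 * y 4 * z 2 + (1/2) * l2 * x 2 * y 1 * z 4 + (1/2) * l2 * x 2 * y 4 * z 1 + (1/2) * l2 * x 3 * y 0 * z 4 + (1/2) * l2 * x 3 * y 4 * z 0 + l3 * x 0 * y 0 * z 4 + l3 * x 0 * y 4 * z 0 - l3 * x 1 * y 1 * z 4 - l3 * x 1 * y 4 * z 1 - l3 * x 2 * y 2 * z 4 - l3 * x 2 * y 4 * z 2 + l3 * x 3 * y 3 * z 4 + l3 * x 3 * y 4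 * z 3 + (1/2) * l4 * x 0 * y 1 * z 4 + (1/2) * l4 * x 0 * y 4 * z 1 + (1/2) * l4 * x 1 * y 0 * z 4 + (1/2) * l4 * x 1 * y 4 * z 0 - (1/2) * l4 * x 2 * y 3 * z 4 - (1/2) * l4 * x 2 * y 4 * z 3 - (1/2) * l4 * x 3 * y 2 * z 4 - (1/2) * l4 * x 3 * y 4 * z 2 + (1/2) * m1 * x 0 * y 3 * z 4 + (1/2) * m1 * x 0 * y 4 * z 3 + (1/2) * m1 * x 1 * y 2 * z 4 + (1/2) * m1 * x 1 * y 4 * z 2 + (1/2) * m1 * x 2 * y 1 * z 4 + (1/2) * m1 * x 2 * y 4 * z 1 + (1/2) * m1 * x 3 * y 0 * z 4 + (1/2) * m1 * x 3 * y 4 * z 0 + (1/2) * m3 * x 0 * y 1 * z 4 + (1/2) * m3 * x 0 * y 4 * z 1 + (1/2) * m3 * x 1 * y 0 * z 4 + (1/2) * m3 * x 1 * y 4 * z 0 - (1/2) * m3 * x 2 * y 3 * z 4 - (1/2) * m3 * x 2 * y 4 * z 3 - (1/2) * m3 * x 3 * y 2 * z 4 - (1/2) * m3 * x 3 * y 4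 * z 2 := by
  unfold Ften
  rw [nabla_eq, nabla_eq]
  simp only [gf, phi, Pi.sub_apply, Matrix.cons_val_zero, Matrix.cons_val_one,
    Matrix.head_cons, Matrix.cons_val_two, Matrix.tail_cons, Matrix.cons_val_three,
    Matrix.cons_val_four]
  ring

set_option maxHeartbeats 2000000 in
/-- F(x,y,z) = η(y)F(x,z,ξ) + η(z)F(x,y,ξ) holds, and the Lee forms
θ and θ* vanish identically; hence the manifold is of class F₆. -/
theorem stmt15 (l1 l2 l3 l4 m1 m3 : ℝ) :
    (∀ x y z : Fin 5 → ℝ,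
      Ften l1 l2 l3 l4 m1 m3 x y z
        = eta y * Ften l1 l2 l3 l4 m1 m3 x z xi + eta z * Ften l1 l2 l3 l4 m1 m3 x y xi) ∧
    (∀ z : Fin 5 → ℝ, ∑ i : Fin 5, eps i * Ften l1 l2 l3 l4 m1 m3 (e i) (e i) z = 0) ∧
    (∀ z : Fin 5 → ℝ, ∑ i : Fin 5, eps i * Ften l1 l2 l3 l4 m1 m3 (e i) (phi (e i)) z = 0) := by
  refine ⟨fun x y z => ?_, fun z => ?_, fun z => ?_⟩ <;>
  · simp (config := { decide := true }) only [Fin.sum_univ_five, Ften_eq, eta, xi, e, phi, eps,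
      Pi.single, Function.update, Matrix.cons_val_zero, Matrix.cons_val_one, Matrix.head_cons,
      Matrix.cons_val_two, Matrix.tail_cons, Matrix.cons_val_three, Matrix.cons_val_four,
      ite_true, ite_false]
    norm_num
    try ring
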